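/- arXiv:2104.05021 — 3 statements merged into one kernel-verified Lean document; each statement's English description precedes it below -/
import Mathlib

section
/- Let N > R ≥ 1 be integers and let g_1,…,g_R: Q → R be functions on a set Q. Then for every positive semi-definite matrix Λ = (λ_{r,s}) ∈ R^{R×R} there exist vectors ξ_1,…,ξ_N ∈ R^R such that the centered empirical covariance matrix N^{-1} Σ_{n=1}^N (ξ_n − ξ̄)(ξ_n − ξ̄)ᵀ equals Λ (where ξ̄ = N^{-1} Σ_{n=1}^N ξ_n); consequently, every kernel of the form Σ_{r=1}^R Σ_{s=1}^R λ_{r,s} g_r(u) g_s(v) with Λ positive semi-definite is the empirical covariance kernel N^{-1} Σ_{n=1}^N (X_n^{NN}(u) − X̄^{NN}(u))(X_n^{NN}(v) − X̄^{NN}(v)) of the N fields X_n^{NN} = Σ_{r=1}^R ξ_{n,r} g_r, so the class of such empirical covariance kernels based on N fields coincides with the class of all CovNet kernels Σ_{r,s} λ_{r,s} g_r(u) g_s(v) with Λ positive semi-definite. -/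
noncomputable section

/-- The centered empirical covariance matrix of the coefficient vectors `ξ_1, …, ξ_N ∈ ℝ^R`:
`N⁻¹ Σ_n (ξ_n − ξ̄)(ξ_n − ξ̄)ᵀ`. -/
def empCovMat (N R : ℕ) (ξ : Fin N → Fin R → ℝ) (r s : Fin R) : ℝ :=
  (N : ℝ)⁻¹ * ∑ n, (ξ n r - (N : ℝ)⁻¹ * ∑ m, ξ m r) * (ξ n s - (N : ℝ)⁻¹ * ∑ m, ξ m s)

/-- The field `X_n^{NN} = Σ_r ξ_{n,r} g_r`. -/
def fieldNN {Q : Type*} (R : ℕ) (g : Fin R → Q → ℝ) (ξ : Fin R → ℝ) (u : Q) : ℝ :=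
  ∑ r, ξ r * g r u

/-- The centered empirical covariance kernel of the fields `X_1^{NN}, …, X_N^{NN}`:
`(u,v) ↦ N⁻¹ Σ_n (X_n^{NN}(u) − X̄^{NN}(u)) (X_n^{NN}(v) − X̄^{NN}(v))`. -/
def empCovKer {Q : Type*} (N R : ℕ) (g : Fin R → Q → ℝ) (ξ : Fin N → Fin R → ℝ)
    (u v : Q) : ℝ :=
  (N : ℝ)⁻¹ * ∑ n,
    (fieldNN R g (ξ n) u - (N : ℝ)⁻¹ * ∑ m, fieldNN R g (ξ m) u) *
    (fieldNN R g (ξ n) v - (N : ℝ)⁻¹ * ∑ m, fieldNN R g (ξ m) v)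

lemma exists_ons (N R : ℕ) (hNR : R < N) :
    ∃ u : Fin R → Fin N → ℝ,
      (∀ r, ∑ n, u r n = 0) ∧ (∀ r s, ∑ n, u r n * u s n = if r = s then 1 else 0) := by
  have hN : 0 < N := lt_of_le_of_lt (Nat.zero_le R) hNR
  haveI : NeZero N := ⟨hN.ne'⟩
  set E := EuclideanSpace ℝ (Fin N)
  set ones : E := WithLp.toLp 2 (fun _ => 1) with hones
  have hones0 : ones ≠ 0 := by
    intro h
    have : (1 : ℝ) = 0 := congrArg (fun x : E => x ⟨0, hN⟩) h
    norm_num at this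
  set W := (ℝ ∙ ones)ᗮ with hW
  have hrankE : Module.finrank ℝ E = N := by
    simp [E, finrank_euclideanSpace_fin]
  have hspan : Module.finrank ℝ (ℝ ∙ ones) = 1 := finrank_span_singleton hones0
  have hsum : 1 + Module.finrank ℝ W = N := by
    have h := Submodule.finrank_add_finrank_orthogonal (𝕜 := ℝ) (E := E) (ℝ ∙ ones)
    rw [hspan, hrankE, ← hW] at h
    exact h
  have hle : R ≤ Module.finrank ℝ W := by omega
  set b := stdOrthonormalBasis ℝ W
  refine ⟨fun r n => (b (Fin.castLE hle r) : E) n, ?_, ?_⟩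
  · intro r
    have hmem : ((b (Fin.castLE hle r)) : E) ∈ W := (b (Fin.castLE hle r)).2
    have := (Submodule.mem_orthogonal _ _).1 hmem ones (Submodule.mem_span_singleton_self _)
    rw [PiLp.inner_apply] at this
    simpa [hones] using this
  · intro r s
    have horth := b.orthonormal
    rw [orthonormal_iff_ite] at horth
    have h2 := horth (Fin.castLE hle r) (Fin.castLE hle s)
    rw [Submodule.coe_inner, PiLp.inner_apply] at h2
    simp only [RCLike.inner_apply, conj_trivial] at h2
    refine (Finset.sum_congr rfl fun x _ => mul_comm _ _).trans (h2.trans ?_)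
    by_cases h : r = s
    · simp [h]
    · simp [h, fun hc => h (Fin.castLE_injective hle hc)]

lemma empCovKer_eq {Q : Type*} (N R : ℕ) (g : Fin R → Q → ℝ) (ξ : Fin N → Fin R → ℝ)
    (u v : Q) :
    empCovKer N R g ξ u v = ∑ r, ∑ s, empCovMat N R ξ r s * g r u * g s v := by
  have center : ∀ (x : Q) (n : Fin N),
      fieldNN R g (ξ n) x - (N : ℝ)⁻¹ * ∑ m, fieldNN R g (ξ m) x
        = ∑ r, (ξ n r - (N : ℝ)⁻¹ * ∑ m, ξ m r) * g r x := by
    intro x n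
    unfold fieldNN
    rw [Finset.sum_comm (f := fun m r => ξ m r * g r x)]
    simp only [sub_mul, Finset.sum_sub_distrib, Finset.mul_sum]
    congr 1
    refine Finset.sum_congr rfl fun r _ => ?_
    rw [Finset.sum_mul]
    exact Finset.sum_congr rfl fun n _ => by ring
  unfold empCovKer empCovMat
  simp only [center]
  set w : Fin N → Fin R → ℝ := fun n r => ξ n r - (N : ℝ)⁻¹ * ∑ m, ξ m r with hw
  conv_lhs => rw [Finset.mul_sum]
  have expand : ∀ n : Fin N,
      (N : ℝ)⁻¹ * ((∑ r, w n r * g r u) * ∑ s, w n s * g s v)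
        = ∑ r, ∑ s, (N : ℝ)⁻¹ * (w n r * w n s) * (g r u * g s v) := by
    intro n
    rw [Finset.sum_mul_sum, Finset.mul_sum]
    refine Finset.sum_congr rfl fun r _ => ?_
    rw [Finset.mul_sum]
    exact Finset.sum_congr rfl fun s _ => by ring
  refine (Finset.sum_congr rfl fun n _ => expand n).trans ?_
  rw [Finset.sum_comm]
  refine Finset.sum_congr rfl fun r _ => ?_
  rw [Finset.sum_comm]
  refine Finset.sum_congr rfl fun s _ => ?_
  conv_rhs => rw [mul_assoc, mul_assoc, Finset.sum_mul, Finset.mul_sum]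
  exact Finset.sum_congr rfl fun n _ => by ring

open Matrix in
lemma empCovMat_posSemidef (N R : ℕ) (ξ : Fin N → Fin R → ℝ) :
    (Matrix.of (empCovMat N R ξ)).PosSemidef := by
  set w : Fin N → Fin R → ℝ := fun n r => ξ n r - (N : ℝ)⁻¹ * ∑ m, ξ m r with hw
  set B : Matrix (Fin N) (Fin R) ℝ := Matrix.of (fun n r => Real.sqrt (N : ℝ)⁻¹ * w n r)
  have hB : Matrix.of (empCovMat N R ξ) = Bᴴ * B := by
    ext r s
    simp only [Matrix.mul_apply, Matrix.of_apply, Matrix.conjTranspose_apply, star_trivial,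
      B, empCovMat]
    conv_lhs => rw [Finset.mul_sum]
    refine Finset.sum_congr rfl fun n _ => ?_
    have h : Real.sqrt (N : ℝ)⁻¹ * Real.sqrt (N : ℝ)⁻¹ = (N : ℝ)⁻¹ :=
      Real.mul_self_sqrt (by positivity)
    have e1 : ξ n r - (N : ℝ)⁻¹ * ∑ m, ξ m r = w n r := rfl
    have e2 : ξ n s - (N : ℝ)⁻¹ * ∑ m, ξ m s = w n s := rfl
    rw [e1, e2, mul_mul_mul_comm, h]
  rw [hB]
  exact Matrix.posSemidef_conjTranspose_mul_self B

open scoped MatrixOrder in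
def psdSqrt {R : ℕ} (Λ : Matrix (Fin R) (Fin R) ℝ) : Matrix (Fin R) (Fin R) ℝ := CFC.sqrt Λ

open scoped MatrixOrder in
lemma psdSqrt_isHermitian {R : ℕ} (Λ : Matrix (Fin R) (Fin R) ℝ) : (psdSqrt Λ).IsHermitian :=
  (Matrix.nonneg_iff_posSemidef.mp (CFC.sqrt_nonneg Λ)).isHermitian

open scoped MatrixOrder in
lemma psdSqrt_mul_self {R : ℕ} (Λ : Matrix (Fin R) (Fin R) ℝ) (hΛ : Λ.PosSemidef) :
    psdSqrt Λ * psdSqrt Λ = Λ :=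
  CFC.sqrt_mul_sqrt_self Λ (Matrix.nonneg_iff_posSemidef.mpr hΛ)

/-- **Equivalence between CovNet kernels and empirical covariances of shared-structure
networks.**  If `N > R ≥ 1` then: (a) for every positive semi-definite `Λ ∈ ℝ^{R×R}` there
are coefficient vectors `ξ_1, …, ξ_N ∈ ℝ^R` whose centered empirical covariance matrix is
exactly `Λ`, and consequently the CovNet kernel `Σ_{r,s} λ_{r,s} g_r(u) g_s(v)` is the
empirical covariance kernel of the `N` fields `X_n^{NN} = Σ_r ξ_{n,r} g_r`; (b) the class of
empirical covariance kernels of `N` such fields coincides with the class of all CovNet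
kernels with positive semi-definite coefficient matrix. -/
theorem covnet_empirical_class_equivalence {Q : Type*} (N R : ℕ)
    (hR : 1 ≤ R) (hNR : R < N) (g : Fin R → Q → ℝ) :
    (∀ Λ : Matrix (Fin R) (Fin R) ℝ, Λ.PosSemidef →
      ∃ ξ : Fin N → Fin R → ℝ,
        (∀ r s, empCovMat N R ξ r s = Λ r s) ∧
        (∀ u v : Q, empCovKer N R g ξ u v = ∑ r, ∑ s, Λ r s * g r u * g s v)) ∧
    ({k : Q → Q → ℝ | ∃ ξ : Fin N → Fin R → ℝ, ∀ u v, k u v = empCovKer N R g ξ u v}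
      = {k : Q → Q → ℝ | ∃ Λ : Matrix (Fin R) (Fin R) ℝ, Λ.PosSemidef ∧
          ∀ u v, k u v = ∑ r, ∑ s, Λ r s * g r u * g s v}) := by
  have hN : 0 < N := lt_of_le_of_lt (Nat.zero_le R) hNR
  have hNne : (N : ℝ) ≠ 0 := Nat.cast_ne_zero.mpr hN.ne'
  have parta : ∀ Λ : Matrix (Fin R) (Fin R) ℝ, Λ.PosSemidef →
      ∃ ξ : Fin N → Fin R → ℝ,
        (∀ r s, empCovMat N R ξ r s = Λ r s) ∧
        (∀ u v : Q, empCovKer N R g ξ u v = ∑ r, ∑ s, Λ r s * g r u * g s v) := by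
    intro Λ hΛ
    obtain ⟨u, hsum0, horth⟩ := exists_ons N R hNR
    set B := psdSqrt Λ with hBdef
    have hBsym : ∀ t r, B t r = B r t := by
      intro t r
      rw [hBdef]
      exact (star_trivial _).symm.trans ((psdSqrt_isHermitian Λ).apply r t)
    set S : Fin N → Fin R → ℝ := fun n r => ∑ t, u t n * B t r with hS
    set ξ : Fin N → Fin R → ℝ := fun n r => Real.sqrt N * S n r with hξ
    have hmean : ∀ r, ∑ m, ξ m r = 0 := by
      intro r
      simp only [hξ]
      rw [← Finset.mul_sum, hS]
      rw [Finset.sum_comm]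
      have : ∀ t : Fin R, ∑ m, u t m * B t r = 0 := by
        intro t
        rw [← Finset.sum_mul, hsum0 t, zero_mul]
      simp [this]
    have hSS : ∀ r s, ∑ n, S n r * S n s = ∑ t, B t r * B t s := by
      intro r s
      simp only [hS, Finset.sum_mul_sum]
      rw [Finset.sum_comm]
      refine Finset.sum_congr rfl fun t _ => ?_
      rw [Finset.sum_comm]
      have h1 : ∀ t' : Fin R, ∑ n, (u t n * B t r) * (u t' n * B t' s)
          = (B t r * B t' s) * (if t = t' then 1 else 0) := by
        intro t'
        rw [← horth t t', Finset.mul_sum]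
        exact Finset.sum_congr rfl fun n _ => by ring
      simp only [h1, mul_ite, mul_one, mul_zero]
      simp
    have hmat : ∀ r s, empCovMat N R ξ r s = Λ r s := by
      intro r s
      unfold empCovMat
      rw [hmean r, hmean s]
      simp only [mul_zero, sub_zero]
      have hterm : ∀ n : Fin N, ξ n r * ξ n s = (N : ℝ) * (S n r * S n s) := by
        intro n
        simp only [hξ]
        have h : Real.sqrt N * Real.sqrt N = (N : ℝ) := Real.mul_self_sqrt (by positivity)
        rw [mul_mul_mul_comm, h]
      simp only [hterm]
      rw [← Finset.mul_sum, hSS, ← mul_assoc, inv_mul_cancel₀ hNne, one_mul]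
      have : ∑ t, B t r * B t s = (B * B) r s := by
        rw [Matrix.mul_apply]
        exact Finset.sum_congr rfl fun t _ => by rw [hBsym t r]
      rw [this, psdSqrt_mul_self Λ hΛ]
    refine ⟨ξ, hmat, fun u v => ?_⟩
    rw [empCovKer_eq]
    exact Finset.sum_congr rfl fun r _ => Finset.sum_congr rfl fun s _ => by rw [hmat r s]
  refine ⟨parta, ?_⟩
  ext k
  simp only [Set.mem_setOf_eq]
  constructor
  · rintro ⟨ξ, hk⟩
    refine ⟨Matrix.of (empCovMat N R ξ), empCovMat_posSemidef N R ξ, fun u v => ?_⟩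
    rw [hk u v, empCovKer_eq]
    rfl
  · rintro ⟨Λ, hΛ, hk⟩
    obtain ⟨ξ, -, hker⟩ := parta Λ hΛ
    exact ⟨ξ, fun u v => by rw [hk u v, hker u v]⟩
end
end

section
/- Let Q be a compact subset of R^d, let (T, μ) be a probability space, and let {φ_t : t ∈ T} be a family of functions in L²(Q) with ‖φ_t‖_{L²(Q)} ≤ B for all t ∈ T. Suppose f ∈ L²(Q) satisfies f(u) = ∫_T φ_t(u) dμ(t) for all u ∈ Q. Then for every integer I ≥ 1 there exist t_1,…,t_I ∈ T and weights w_1,…,w_I ≥ 0 with Σ_{i=1}^I w_i = 1 such that ‖f − Σ_{i=1}^I w_i φ_{t_i}‖_{L²(Q)} ≤ B/√I. -/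
open MeasureTheory

noncomputable section

private theorem aux_mul_integrable {α : Type*} [MeasurableSpace α] {ρ : Measure α}
    {g h : α → ℝ} (hg : MemLp g 2 ρ) (hh : MemLp h 2 ρ) :
    Integrable (fun u => g u * h u) ρ := by
  have hint : Integrable (fun u => 2⁻¹ * (g u ^ 2 + h u ^ 2)) ρ :=
    (hg.integrable_sq.add hh.integrable_sq).const_mul _
  refine Integrable.mono' hint
    (hg.aestronglyMeasurable.mul hh.aestronglyMeasurable) (Filter.Eventually.of_forall fun u => ?_)
  rw [Real.norm_eq_abs, abs_mul]
  nlinarith [sq_nonneg (|g u| - |h u|), sq_abs (g u), sq_abs (h u), abs_nonneg (g u),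
    abs_nonneg (h u)]

private theorem aux_expand_sq {α : Type*} [MeasurableSpace α] {ρ : Measure α}
    {g h : α → ℝ} (hg : MemLp g 2 ρ) (hh : MemLp h 2 ρ) (a b : ℝ) :
    ∫ u, (a * g u + b * h u) ^ 2 ∂ρ =
      a ^ 2 * ∫ u, g u ^ 2 ∂ρ + 2 * a * b * ∫ u, g u * h u ∂ρ + b ^ 2 * ∫ u, h u ^ 2 ∂ρ := by
  have h1 := hg.integrable_sq
  have h2 := hh.integrable_sq
  have h3 := aux_mul_integrable hg hh
  have e : ∀ u, (a * g u + b * h u) ^ 2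
      = a ^ 2 * g u ^ 2 + 2 * a * b * (g u * h u) + b ^ 2 * h u ^ 2 := fun u => by ring
  have hA : Integrable (fun u => a ^ 2 * g u ^ 2 + 2 * a * b * (g u * h u)) ρ :=
    (h1.const_mul _).add (h3.const_mul _)
  simp_rw [e]
  rw [integral_add hA (h2.const_mul _), integral_add (h1.const_mul _) (h3.const_mul _),
      integral_const_mul, integral_const_mul, integral_const_mul]

/-- **Maurey-type approximation lemma (Lemma `approximation_general`).**
Let `Q ⊆ ℝᵈ` be compact, `(T, μ)` a probability space and `{φ_t : t ∈ T}` a family of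
functions in `L²(Q)` with `‖φ_t‖_{L²(Q)} ≤ B` for all `t`.  If `f(u) = ∫_T φ_t(u) dμ(t)`
for all `u ∈ Q`, then for every `I ≥ 1` there are `t_1, …, t_I ∈ T` and convex weights
`w_1, …, w_I` with `‖f − Σ_i w_i φ_{t_i}‖_{L²(Q)} ≤ B / √I`. -/
theorem maurey_approximation {d : ℕ} (Q : Set (Fin d → ℝ)) (hQ : IsCompact Q)
    {T : Type*} [MeasurableSpace T] (μ : Measure T) [IsProbabilityMeasure μ]
    (φ : T → (Fin d → ℝ) → ℝ) (B : ℝ)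
    (hmeas : Measurable (Function.uncurry φ))
    (hL2 : ∀ t, MemLp (φ t) 2 (volume.restrict Q))
    (hB : ∀ t, Real.sqrt (∫ u in Q, (φ t u) ^ 2) ≤ B)
    (f : (Fin d → ℝ) → ℝ)
    (hf : ∀ u ∈ Q, f u = ∫ t, φ t u ∂μ) :
    ∀ I : ℕ, 1 ≤ I → ∃ (t : Fin I → T) (w : Fin I → ℝ),
      (∀ i, 0 ≤ w i) ∧ (∑ i, w i) = 1 ∧
      Real.sqrt (∫ u in Q, (f u - ∑ i, w i * φ (t i) u) ^ 2) ≤ B / Real.sqrt I := by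
  intro I hI
  classical
  set ρ : Measure (Fin d → ℝ) := volume.restrict Q with hρ
  have hQm : MeasurableSet Q := hQ.isClosed.measurableSet
  have hfinρ : IsFiniteMeasure ρ :=
    ⟨by rw [hρ, Measure.restrict_apply_univ]; exact hQ.measure_lt_top⟩
  obtain ⟨t₀⟩ : Nonempty T := by
    by_contra h
    rw [not_nonempty_iff] at h
    have : μ Set.univ = 0 := by simp [Set.univ_eq_empty_iff.2 h]
    simp [measure_univ] at this
  have hB0 : 0 ≤ B := le_trans (Real.sqrt_nonneg _) (hB t₀)
  have hφm : ∀ t, Measurable (φ t) := fun t => hmeas.of_uncurry_left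
  have hjm : Measurable fun p : T × (Fin d → ℝ) => φ p.1 p.2 := hmeas
  have hφsq : ∀ t, Integrable (fun u => φ t u ^ 2) ρ := fun t => (hL2 t).integrable_sq
  have hnsq_nonneg : ∀ t, 0 ≤ ∫ u, φ t u ^ 2 ∂ρ := fun t =>
    integral_nonneg fun u => sq_nonneg _
  have hnsqB : ∀ t, ∫ u, φ t u ^ 2 ∂ρ ≤ B ^ 2 := fun t => by
    nlinarith [hB t, Real.sq_sqrt (hnsq_nonneg t), Real.sqrt_nonneg (∫ u, φ t u ^ 2 ∂ρ)]
  -- joint square integrability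
  have hsqint : Integrable (fun p : T × (Fin d → ℝ) => φ p.1 p.2 ^ 2) (μ.prod ρ) := by
    refine (integrable_prod_iff ((hjm.pow_const 2).aestronglyMeasurable)).2 ⟨?_, ?_⟩
    · exact Filter.Eventually.of_forall fun t => hφsq t
    · refine Integrable.mono' (integrable_const (B ^ 2))
        ?_ (Filter.Eventually.of_forall fun t => ?_)
      · exact ((hjm.pow_const 2).stronglyMeasurable.norm.integral_prod_right').aestronglyMeasurable
      · have : (fun u => ‖φ t u ^ 2‖) = fun u => φ t u ^ 2 := by
          funext u; rw [Real.norm_eq_abs, abs_of_nonneg (sq_nonneg _)]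
        rw [Real.norm_eq_abs, this, abs_of_nonneg (hnsq_nonneg t)]
        exact hnsqB t
  -- the barycenter F
  set F : (Fin d → ℝ) → ℝ := fun u => ∫ t, φ t u ∂μ with hFdef
  have hFm : StronglyMeasurable F := hjm.stronglyMeasurable.integral_prod_left'
  have hfF : f =ᶠ[ae ρ] F :=
    (ae_restrict_iff' hQm).2 (Filter.Eventually.of_forall fun u hu => hf u hu)
  -- F is in L²
  have hGint : Integrable (fun u => ∫ t, φ t u ^ 2 ∂μ) ρ := hsqint.integral_prod_right
  have haeL2 : ∀ᵐ u ∂ρ, Integrable (fun t => φ t u ^ 2) μ := hsqint.prod_left_ae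
  have hJensen : ∀ᵐ u ∂ρ, F u ^ 2 ≤ ∫ t, φ t u ^ 2 ∂μ := by
    filter_upwards [haeL2] with u hu
    have hmt : Measurable fun t => φ t u := hmeas.of_uncurry_right
    have hmem2 : MemLp (fun t => φ t u) 2 μ :=
      (memLp_two_iff_integrable_sq hmt.aestronglyMeasurable).2 hu
    have hint1 : Integrable (fun t => φ t u) μ :=
      hmem2.integrable (by norm_num)
    have expand : ∫ t, (φ t u - F u) ^ 2 ∂μ = (∫ t, φ t u ^ 2 ∂μ) - F u ^ 2 := by
      have e : ∀ t, (φ t u - F u) ^ 2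
          = φ t u ^ 2 - (2 * F u) * φ t u + F u ^ 2 := fun t => by ring
      simp_rw [e]
      have i1 : Integrable (fun t => φ t u ^ 2 - 2 * F u * φ t u) μ :=
        hu.sub (hint1.const_mul _)
      rw [integral_add i1 (integrable_const _),
          integral_sub hu (hint1.const_mul _), integral_const_mul, integral_const]
      simp only [measure_univ, ENNReal.toReal_one, smul_eq_mul, one_mul, probReal_univ]
      have : ∫ t, φ t u ∂μ = F u := rfl
      rw [this]; ring
    have hpos : (0:ℝ) ≤ ∫ t, (φ t u - F u) ^ 2 ∂μ :=
      integral_nonneg fun t => sq_nonneg _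
    nlinarith [hpos, expand]
  have hFL2 : MemLp F 2 ρ := by
    refine (memLp_two_iff_integrable_sq hFm.aestronglyMeasurable).2 ?_
    refine Integrable.mono' hGint ((hFm.pow _).aestronglyMeasurable) ?_
    filter_upwards [hJensen] with u hu
    rwa [Real.norm_eq_abs, abs_of_nonneg (sq_nonneg _)]
  have hNF_nonneg : 0 ≤ ∫ u, F u ^ 2 ∂ρ := integral_nonneg fun u => sq_nonneg _
  -- helper: joint integrability of (s,u) ↦ g u * φ s u, and key Fubini identity
  have sndsq : ∀ g : (Fin d → ℝ) → ℝ, StronglyMeasurable g → MemLp g 2 ρ →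
      Integrable (fun p : T × (Fin d → ℝ) => g p.2 ^ 2) (μ.prod ρ) := by
    intro g hgm hg
    refine (integrable_prod_iff (f := fun p : T × (Fin d → ℝ) => g p.2 ^ 2)
      (((hgm.measurable.comp measurable_snd).pow_const 2).aestronglyMeasurable)).2 ⟨?_, ?_⟩
    · exact Filter.Eventually.of_forall fun t => hg.integrable_sq
    · exact integrable_const (∫ u, ‖g u ^ 2‖ ∂ρ)
  have jointmul : ∀ g : (Fin d → ℝ) → ℝ, StronglyMeasurable g → MemLp g 2 ρ →
      Integrable (fun p : T × (Fin d → ℝ) => g p.2 * φ p.1 p.2) (μ.prod ρ) := by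
    intro g hgm hg
    have hbound : Integrable (fun p : T × (Fin d → ℝ) =>
        2⁻¹ * (g p.2 ^ 2 + φ p.1 p.2 ^ 2)) (μ.prod ρ) :=
      ((sndsq g hgm hg).add hsqint).const_mul _
    refine Integrable.mono' hbound
      (((hgm.measurable.comp measurable_snd).mul hjm).aestronglyMeasurable)
      (Filter.Eventually.of_forall fun p => ?_)
    rw [Real.norm_eq_abs, abs_mul]
    nlinarith [sq_nonneg (|g p.2| - |φ p.1 p.2|), sq_abs (g p.2), sq_abs (φ p.1 p.2),
      abs_nonneg (g p.2), abs_nonneg (φ p.1 p.2)]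
  have keyB : ∀ g : (Fin d → ℝ) → ℝ, StronglyMeasurable g → MemLp g 2 ρ →
      ∫ s, (∫ u, g u * φ s u ∂ρ) ∂μ = ∫ u, g u * F u ∂ρ := by
    intro g hgm hg
    have hswap := integral_integral_swap (f := fun s u => g u * φ s u)
      (μ := μ) (ν := ρ) (jointmul g hgm hg)
    rw [hswap]
    exact integral_congr_ae (Filter.Eventually.of_forall fun u => integral_const_mul _ _)
  have step : ∀ g : (Fin d → ℝ) → ℝ, StronglyMeasurable g → MemLp g 2 ρ →
      ∀ a b : ℝ, ∃ s : T, ∫ u, (a * g u + b * (F u - φ s u)) ^ 2 ∂ρ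
        ≤ a ^ 2 * (∫ u, g u ^ 2 ∂ρ) + b ^ 2 * B ^ 2 := by
    intro g hgm hg a b
    have hGφ : Integrable (fun s => ∫ u, g u * φ s u ∂ρ) μ :=
      (jointmul g hgm hg).integral_prod_left
    have hFΦ : Integrable (fun s => ∫ u, F u * φ s u ∂ρ) μ :=
      (jointmul F hFm hFL2).integral_prod_left
    have hNφ : Integrable (fun s => ∫ u, φ s u ^ 2 ∂ρ) μ := hsqint.integral_prod_left
    set Ng := ∫ u, g u ^ 2 ∂ρ with hNg
    set GF := ∫ u, g u * F u ∂ρ with hGF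
    set NF := ∫ u, F u ^ 2 ∂ρ with hNFdef
    set K : ℝ := a ^ 2 * Ng + 2 * a * b * GF + b ^ 2 * NF with hK
    -- pointwise expansion of W
    have hWs : ∀ s : T, ∫ u, (a * g u + b * (F u - φ s u)) ^ 2 ∂ρ
        = K + (-(2 * a * b)) * (∫ u, g u * φ s u ∂ρ)
            + (-(2 * b ^ 2)) * (∫ u, F u * φ s u ∂ρ)
            + b ^ 2 * (∫ u, φ s u ^ 2 ∂ρ) := by
      intro s
      have hsub : MemLp (fun u => F u - φ s u) 2 ρ := hFL2.sub (hL2 s)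
      have e1 := aux_expand_sq hg hsub a b
      have egh : ∫ u, g u * (F u - φ s u) ∂ρ
          = GF - ∫ u, g u * φ s u ∂ρ := by
        rw [hGF, ← integral_sub (aux_mul_integrable hg hFL2) (aux_mul_integrable hg (hL2 s))]
        exact integral_congr_ae (Filter.Eventually.of_forall fun u => by ring)
      have eh2 : ∫ u, (F u - φ s u) ^ 2 ∂ρ
          = NF - 2 * (∫ u, F u * φ s u ∂ρ) + ∫ u, φ s u ^ 2 ∂ρ := by
        have i1 := hFL2.integrable_sq
        have i2 := (hL2 s).integrable_sq
        have i3 := aux_mul_integrable hFL2 (hL2 s)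
        have e : ∀ u, (F u - φ s u) ^ 2
            = F u ^ 2 - 2 * (F u * φ s u) + φ s u ^ 2 := fun u => by ring
        simp_rw [e]
        have iA : Integrable (fun u => F u ^ 2 - 2 * (F u * φ s u)) ρ :=
          i1.sub (i3.const_mul _)
        rw [integral_add iA i2, integral_sub i1 (i3.const_mul _), integral_const_mul]
      rw [e1, egh, eh2, hK]
      ring
    -- integrate the expansion over μ
    have iA : Integrable (fun s => K + (-(2 * a * b)) * (∫ u, g u * φ s u ∂ρ)) μ :=
      (integrable_const K).add (hGφ.const_mul _)
    have iB : Integrable (fun s => K + (-(2 * a * b)) * (∫ u, g u * φ s u ∂ρ)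
        + (-(2 * b ^ 2)) * (∫ u, F u * φ s u ∂ρ)) μ := iA.add (hFΦ.const_mul _)
    have hWint : Integrable (fun s => ∫ u, (a * g u + b * (F u - φ s u)) ^ 2 ∂ρ) μ :=
      (iB.add (hNφ.const_mul _)).congr
        (Filter.Eventually.of_forall fun s => (hWs s).symm)
    have hkeyg := keyB g hgm hg
    have hkeyF : ∫ s, (∫ u, F u * φ s u ∂ρ) ∂μ = NF := by
      rw [keyB F hFm hFL2, hNFdef]
      exact integral_congr_ae (Filter.Eventually.of_forall fun u => (pow_two (F u)).symm)
    have hGFeq : ∫ u, g u * F u ∂ρ = GF := rfl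
    have hWint_eq : ∫ s, (∫ u, (a * g u + b * (F u - φ s u)) ^ 2 ∂ρ) ∂μ
        = a ^ 2 * Ng + b ^ 2 * ((∫ s, (∫ u, φ s u ^ 2 ∂ρ) ∂μ) - NF) := by
      rw [integral_congr_ae (Filter.Eventually.of_forall hWs),
          integral_add iB (hNφ.const_mul _), integral_add iA (hFΦ.const_mul _),
          integral_add (integrable_const K) (hGφ.const_mul _), integral_const,
          integral_const_mul, integral_const_mul, integral_const_mul,
          hkeyg, hGFeq, hkeyF, hK]
      simp only [measure_univ, ENNReal.toReal_one, smul_eq_mul, one_mul, probReal_univ]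
      ring
    have hNφle : ∫ s, (∫ u, φ s u ^ 2 ∂ρ) ∂μ ≤ B ^ 2 := by
      calc ∫ s, (∫ u, φ s u ^ 2 ∂ρ) ∂μ ≤ ∫ _, B ^ 2 ∂μ :=
            integral_mono hNφ (integrable_const _) fun s => hnsqB s
        _ = B ^ 2 := by simp [measure_univ]
    have hWle : ∫ s, (∫ u, (a * g u + b * (F u - φ s u)) ^ 2 ∂ρ) ∂μ
        ≤ a ^ 2 * Ng + b ^ 2 * B ^ 2 := by
      rw [hWint_eq]
      nlinarith [sq_nonneg b, hNF_nonneg]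
    obtain ⟨s, hs⟩ := exists_le_integral hWint
    exact ⟨s, hs.trans hWle⟩
  -- main induction
  have main : ∀ k : ℕ, 1 ≤ k → ∃ t : Fin k → T,
      (∫ u, (F u - (k : ℝ)⁻¹ * ∑ i, φ (t i) u) ^ 2 ∂ρ) ≤ B ^ 2 / k := by
    intro k
    induction k with
    | zero => intro h; exact absurd h (by norm_num)
    | succ n ih =>
      intro _
      rcases Nat.eq_zero_or_pos n with hn | hn
      · subst hn
        obtain ⟨s, hs⟩ := step F hFm hFL2 0 1
        refine ⟨fun _ => s, ?_⟩
        have e : ∀ u, F u - ((0 + 1 : ℕ) : ℝ)⁻¹ * ∑ i : Fin (0 + 1), φ s u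
            = 0 * F u + 1 * (F u - φ s u) := by
          intro u; simp
        calc ∫ u, (F u - ((0 + 1 : ℕ) : ℝ)⁻¹ * ∑ _i : Fin (0 + 1), φ s u) ^ 2 ∂ρ
            = ∫ u, (0 * F u + 1 * (F u - φ s u)) ^ 2 ∂ρ :=
              integral_congr_ae (Filter.Eventually.of_forall fun u => congrArg (fun x => x ^ 2) (e u))
          _ ≤ 0 ^ 2 * (∫ u, F u ^ 2 ∂ρ) + 1 ^ 2 * B ^ 2 := hs
          _ ≤ B ^ 2 / ((0 + 1 : ℕ) : ℝ) := by norm_num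
      · obtain ⟨t, ht⟩ := ih hn
        have hn0 : ((n : ℝ)) ≠ 0 := Nat.cast_ne_zero.2 (by omega)
        have hn1 : ((n : ℝ)) + 1 ≠ 0 := by positivity
        set g : (Fin d → ℝ) → ℝ := fun u => F u - (n : ℝ)⁻¹ * ∑ i, φ (t i) u with hgdef
        have hsumm : Measurable fun u => ∑ i, φ (t i) u :=
          Finset.measurable_sum Finset.univ fun i _ => hφm (t i)
        have hgm : StronglyMeasurable g :=
          (hFm.measurable.sub (hsumm.const_mul _)).stronglyMeasurable
        have hgL2 : MemLp g 2 ρ := by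
          refine hFL2.sub ?_
          exact (memLp_finset_sum Finset.univ fun i _ => hL2 (t i)).const_mul _
        obtain ⟨s, hs⟩ := step g hgm hgL2 ((n : ℝ) / ((n : ℝ) + 1)) (1 / ((n : ℝ) + 1))
        set t' : Fin (n + 1) → T := Fin.snoc t s with ht'
        refine ⟨t', ?_⟩
        have hsum : ∀ u, ∑ i : Fin (n + 1), φ (t' i) u
            = (∑ i : Fin n, φ (t i) u) + φ s u := by
          intro u
          rw [Fin.sum_univ_castSucc]
          simp [ht', Fin.snoc_castSucc, Fin.snoc_last]
        have e : ∀ u, F u - ((n + 1 : ℕ) : ℝ)⁻¹ * ∑ i : Fin (n + 1), φ (t' i) u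
            = ((n : ℝ) / ((n : ℝ) + 1)) * g u
              + (1 / ((n : ℝ) + 1)) * (F u - φ s u) := by
          intro u
          rw [hsum u, hgdef]
          push_cast
          field_simp
          ring
        have harith : ((n : ℝ) / ((n : ℝ) + 1)) ^ 2 * (B ^ 2 / n)
            + (1 / ((n : ℝ) + 1)) ^ 2 * B ^ 2 = B ^ 2 / ((n : ℝ) + 1) := by
          field_simp
        calc ∫ u, (F u - ((n + 1 : ℕ) : ℝ)⁻¹ * ∑ i : Fin (n + 1), φ (t' i) u) ^ 2 ∂ρ
            = ∫ u, (((n : ℝ) / ((n : ℝ) + 1)) * g u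
                + (1 / ((n : ℝ) + 1)) * (F u - φ s u)) ^ 2 ∂ρ :=
              integral_congr_ae (Filter.Eventually.of_forall fun u => congrArg (fun x => x ^ 2) (e u))
          _ ≤ ((n : ℝ) / ((n : ℝ) + 1)) ^ 2 * (∫ u, g u ^ 2 ∂ρ)
                + (1 / ((n : ℝ) + 1)) ^ 2 * B ^ 2 := hs
          _ ≤ ((n : ℝ) / ((n : ℝ) + 1)) ^ 2 * (B ^ 2 / n)
                + (1 / ((n : ℝ) + 1)) ^ 2 * B ^ 2 := by
              have := mul_le_mul_of_nonneg_left ht (sq_nonneg ((n : ℝ) / ((n : ℝ) + 1)))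
              linarith
          _ = B ^ 2 / ((n + 1 : ℕ) : ℝ) := by push_cast; exact harith
  -- assemble
  obtain ⟨t, ht⟩ := main I hI
  have hI0 : ((I : ℝ)) ≠ 0 := Nat.cast_ne_zero.2 (by omega)
  refine ⟨t, fun _ => (I : ℝ)⁻¹, fun i => by positivity, ?_, ?_⟩
  · rw [Finset.sum_const, Finset.card_univ, Fintype.card_fin, nsmul_eq_mul,
      mul_inv_cancel₀ hI0]
  · have hcong : ∫ u, (f u - ∑ i, (I : ℝ)⁻¹ * φ (t i) u) ^ 2 ∂ρ
        = ∫ u, (F u - (I : ℝ)⁻¹ * ∑ i, φ (t i) u) ^ 2 ∂ρ := by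
      refine integral_congr_ae ?_
      filter_upwards [hfF] with u hu
      rw [hu, Finset.mul_sum]
    calc Real.sqrt (∫ u, (f u - ∑ i, (I : ℝ)⁻¹ * φ (t i) u) ^ 2 ∂ρ)
        ≤ Real.sqrt (B ^ 2 / I) := Real.sqrt_le_sqrt (by rw [hcong]; exact ht)
      _ = B / Real.sqrt I := by
          rw [Real.sqrt_div (sq_nonneg B), Real.sqrt_sq hB0]

end
end

section
/- Let I ⊂ R^k be compact and let H be a collection of functions from I to R with ‖h‖_{L²(I)} ≤ M for all h ∈ H. For γ > 0 and an integer R ≥ 1, define E_{R,H,γ} = {Σ_{i=1}^R α_i h_i : h_i ∈ H, 0 ≤ α_i ≤ γ}. Then for any ε_1, ε_2 > 0, the covering number satisfies N(ε_1 + ε_2, E_{R,H,γ}, ‖·‖_{L²(I)}) ≤ { (MRγ/(2ε_2) + 1) × N(ε_1/(Rγ), H, ‖·‖_{L²(I)}) }^R. -/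
open MeasureTheory
open scoped ENNReal

noncomputable section

/-- The `L²(S)` distance between two functions. -/
def L2dist {α : Type*} [MeasureSpace α] (S : Set α) (f g : α → ℝ) : ℝ :=
  Real.sqrt (∫ x in S, (f x - g x) ^ 2)

/-- The `ε`-covering number of `T` with respect to the (pseudo-)distance `ρ`: the smallest
cardinality of a finite subset `T' ⊆ T` such that every `t ∈ T` is within distance `ε` of
some `t' ∈ T'`; it is `∞` if no finite cover exists. -/
def covN {β : Type*} (ρ : β → β → ℝ) (ε : ℝ) (T : Set β) : ℝ≥0∞ :=
  sInf ((fun F : Finset β => (F.card : ℝ≥0∞)) ''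
    {F : Finset β | ↑F ⊆ T ∧ ∀ t ∈ T, ∃ t' ∈ F, ρ t t' ≤ ε})

lemma norm_toLp_sqrt {α : Type*} [MeasurableSpace α] {μ : Measure α} {f : α → ℝ}
    (hf : MemLp f 2 μ) : ‖hf.toLp f‖ = Real.sqrt (∫ x, f x ^ 2 ∂μ) := by
  rw [Lp.norm_toLp, hf.eLpNorm_eq_integral_rpow_norm two_ne_zero ENNReal.ofNat_ne_top,
    ENNReal.toReal_ofReal (by positivity)]
  have h2 : (2 : ℝ≥0∞).toReal = (2 : ℝ) := by simp
  rw [h2]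
  have : (∫ a, ‖f a‖ ^ (2:ℝ) ∂μ) = ∫ a, f a ^ 2 ∂μ := by
    congr 1; ext a
    rw [show ((2:ℝ)) = ((2:ℕ):ℝ) by norm_num, Real.rpow_natCast]
    simp [sq_abs]
  rw [this, Real.sqrt_eq_rpow]
  norm_num

lemma L2dist_eq_norm {k : ℕ} {I : Set (Fin k → ℝ)} {f g : (Fin k → ℝ) → ℝ}
    (hf : MemLp f 2 (volume.restrict I)) (hg : MemLp g 2 (volume.restrict I)) :
    L2dist I f g = ‖hf.toLp f - hg.toLp g‖ := by
  rw [← MemLp.toLp_sub, norm_toLp_sqrt]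
  simp only [L2dist, Pi.sub_apply]

lemma Lp_coeFn_sum {α E : Type*} [MeasurableSpace α] {μ : Measure α}
    [NormedAddCommGroup E] {p : ℝ≥0∞} {ι : Type*} (s : Finset ι) (F : ι → Lp E p μ) :
    (↑↑(∑ i ∈ s, F i) : α → E) =ᵐ[μ] fun x => ∑ i ∈ s, F i x := by
  classical
  induction s using Finset.induction_on with
  | empty =>
    simp only [Finset.sum_empty]
    exact Lp.coeFn_zero E p μ
  | insert _ _ hi ih =>
    rw [Finset.sum_insert hi]
    refine (Lp.coeFn_add _ _).trans ?_
    filter_upwards [ih] with x hx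
    simp only [Finset.sum_insert hi, Pi.add_apply, hx]

lemma toLp_sum {α : Type*} [MeasurableSpace α] {μ : Measure α} {n : ℕ}
    (h : Fin n → α → ℝ) (a : Fin n → ℝ) (hm : ∀ i, MemLp (h i) 2 μ)
    (hs : MemLp (fun x => ∑ i, a i * h i x) 2 μ) :
    hs.toLp _ = ∑ i, a i • (hm i).toLp (h i) := by
  apply Lp.ext
  have h1 := hs.coeFn_toLp
  have h2 : ∀ᵐ x ∂μ, (↑↑(∑ i, a i • (hm i).toLp (h i)) : α → ℝ) x
      = ∑ i, a i * h i x := by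
    have := Lp_coeFn_sum Finset.univ (fun i => a i • (hm i).toLp (h i))
    filter_upwards [this, ae_all_iff.2 fun i : Fin n =>
      ((Lp.coeFn_smul (a i) ((hm i).toLp (h i))).and ((hm i).coeFn_toLp))] with x hx hx2
    rw [hx]
    exact Finset.sum_congr rfl fun i _ => by
      rw [(hx2 i).1, Pi.smul_apply, (hx2 i).2, smul_eq_mul]
  filter_upwards [h1, h2] with x hx1 hx2
  rw [hx1, hx2]

lemma covN_le_card {β : Type*} {ρ : β → β → ℝ} {ε : ℝ} {T : Set β} {F : Finset β}
    (h1 : ↑F ⊆ T) (h2 : ∀ t ∈ T, ∃ t' ∈ F, ρ t t' ≤ ε) :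
    covN ρ ε T ≤ F.card :=
  sInf_le ⟨F, ⟨h1, h2⟩, rfl⟩

lemma exists_cover_of_covN_ne_top {β : Type*} {ρ : β → β → ℝ} {ε : ℝ} {T : Set β}
    (h : covN ρ ε T ≠ ⊤) :
    ∃ F : Finset β, ↑F ⊆ T ∧ (∀ t ∈ T, ∃ t' ∈ F, ρ t t' ≤ ε) ∧
      (F.card : ℝ≥0∞) ≤ covN ρ ε T := by
  classical
  have hne : {F : Finset β | ↑F ⊆ T ∧ ∀ t ∈ T, ∃ t' ∈ F, ρ t t' ≤ ε}.Nonempty := by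
    by_contra hc
    rw [Set.not_nonempty_iff_eq_empty] at hc
    simp [covN, hc] at h
  obtain ⟨F₀, hF₀⟩ := hne
  have hex : ∃ n : ℕ, ∃ F : Finset β,
      (↑F ⊆ T ∧ (∀ t ∈ T, ∃ t' ∈ F, ρ t t' ≤ ε)) ∧ F.card = n := ⟨F₀.card, F₀, hF₀, rfl⟩
  obtain ⟨F, hF, hcard⟩ := Nat.find_spec hex
  refine ⟨F, hF.1, hF.2, ?_⟩
  refine le_sInf ?_
  rintro b ⟨F', hF', rfl⟩
  rw [hcard]
  show ((Nat.find hex : ℕ) : ℝ≥0∞) ≤ (F'.card : ℝ≥0∞)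
  exact_mod_cast Nat.find_min' hex ⟨F', hF', rfl⟩

lemma grid_cover (γ δ : ℝ) (hγ : 0 < γ) (hδ : 0 < δ) :
    ∃ G : Finset ℝ, (G.card : ℝ≥0∞) ≤ ENNReal.ofReal (γ / δ + 1) ∧
      (∀ b ∈ G, 0 ≤ b ∧ b ≤ γ) ∧
      ∀ α, 0 ≤ α → α ≤ γ → ∃ b ∈ G, |α - b| ≤ δ / 2 := by
  classical
  set m : ℕ := ⌈γ / δ⌉₊ with hm
  have hm1 : 1 ≤ m := Nat.one_le_ceil_iff.2 (by positivity)
  refine ⟨(Finset.range m).image (fun j : ℕ => min (δ / 2 + δ * j) γ), ?_, ?_, ?_⟩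
  · calc ((Finset.image _ (Finset.range m)).card : ℝ≥0∞)
        ≤ (m : ℝ≥0∞) := by exact_mod_cast Finset.card_image_le.trans (by simp)
    _ ≤ ENNReal.ofReal (γ / δ + 1) := by
        rw [show ((m : ℝ≥0∞)) = ENNReal.ofReal (m : ℝ) by simp]
        exact ENNReal.ofReal_le_ofReal (le_of_lt (Nat.ceil_lt_add_one (by positivity)))
  · intro b hb
    simp only [Finset.mem_image] at hb
    obtain ⟨j, _, rfl⟩ := hb
    constructor
    · apply le_min (by positivity) hγ.le
    · exact min_le_right _ _
  · intro α hα0 hαγ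
    set j : ℕ := min ⌊α / δ⌋₊ (m - 1) with hj
    have hjm : j < m := lt_of_le_of_lt (min_le_right _ _) (by omega)
    refine ⟨min (δ / 2 + δ * j) γ, Finset.mem_image.2 ⟨j, Finset.mem_range.2 hjm, rfl⟩, ?_⟩
    have hlow : (j : ℝ) * δ ≤ α := by
      calc (j : ℝ) * δ ≤ (⌊α / δ⌋₊ : ℝ) * δ := by
            apply mul_le_mul_of_nonneg_right _ hδ.le
            exact_mod_cast min_le_left _ _
      _ ≤ (α / δ) * δ := mul_le_mul_of_nonneg_right (Nat.floor_le (by positivity)) hδ.le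
      _ = α := div_mul_cancel₀ _ hδ.ne'
    have hup : α ≤ ((j : ℝ) + 1) * δ := by
      rcases le_or_gt ⌊α / δ⌋₊ (m - 1) with hc | hc
      · have hjeq : j = ⌊α / δ⌋₊ := min_eq_left hc
        have := Nat.lt_floor_add_one (α / δ)
        have h2 : α / δ < (j : ℝ) + 1 := by rw [hjeq]; exact_mod_cast this
        calc α = (α / δ) * δ := (div_mul_cancel₀ _ hδ.ne').symm
        _ ≤ ((j : ℝ) + 1) * δ := mul_le_mul_of_nonneg_right h2.le hδ.le
      · have hjeq : j = m - 1 := min_eq_right (le_of_lt hc)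
        have h2 : γ ≤ (m : ℝ) * δ := by
          calc γ = (γ / δ) * δ := (div_mul_cancel₀ _ hδ.ne').symm
          _ ≤ (m : ℝ) * δ := mul_le_mul_of_nonneg_right (Nat.le_ceil _) hδ.le
        have h3 : ((j : ℝ) + 1) = (m : ℝ) := by
          rw [hjeq]
          have : ((m - 1 : ℕ) : ℝ) = (m : ℝ) - 1 := by
            rw [Nat.cast_sub hm1]; simp
          rw [this]; ring
        rw [h3]
        exact hαγ.trans h2
    rcases le_or_gt (δ / 2 + δ * j) γ with hc | hc
    · rw [min_eq_left hc, abs_le]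
      constructor <;> nlinarith
    · rw [min_eq_right hc.le, abs_le]
      constructor <;> nlinarith

/-- **Covering number of nonnegative bounded linear combinations (Lemma
`cover_linear_combination_positive`).**  For a class `H` of functions in `L²(I)` with norms
bounded by `M`, and `E_{R,H,γ} = {Σ_{i=1}^R α_i h_i : h_i ∈ H, 0 ≤ α_i ≤ γ}`, one has for
all `ε₁, ε₂ > 0`:
`N(ε₁+ε₂, E_{R,H,γ}) ≤ {(MRγ/(2ε₂) + 1) ⬝ N(ε₁/(Rγ), H)}^R`. -/
theorem covering_nonneg_combinations {k : ℕ} (I : Set (Fin k → ℝ)) (hI : IsCompact I)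
    (H : Set ((Fin k → ℝ) → ℝ)) (M : ℝ)
    (hH : ∀ h ∈ H, MemLp h 2 (volume.restrict I))
    (hM : ∀ h ∈ H, Real.sqrt (∫ x in I, (h x) ^ 2) ≤ M)
    (R : ℕ) (hR : 1 ≤ R) (γ : ℝ) (hγ : 0 < γ)
    (ε₁ ε₂ : ℝ) (hε₁ : 0 < ε₁) (hε₂ : 0 < ε₂) :
    covN (L2dist I) (ε₁ + ε₂)
        {f | ∃ (h : Fin R → (Fin k → ℝ) → ℝ) (a : Fin R → ℝ),
          (∀ i, h i ∈ H) ∧ (∀ i, 0 ≤ a i ∧ a i ≤ γ) ∧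
          f = fun x => ∑ i, a i * h i x}
      ≤ (ENNReal.ofReal (M * R * γ / (2 * ε₂) + 1) *
          covN (L2dist I) (ε₁ / (R * γ)) H) ^ R := by
  classical
  set E : Set ((Fin k → ℝ) → ℝ) :=
    {f | ∃ (h : Fin R → (Fin k → ℝ) → ℝ) (a : Fin R → ℝ),
      (∀ i, h i ∈ H) ∧ (∀ i, 0 ≤ a i ∧ a i ≤ γ) ∧
      f = fun x => ∑ i, a i * h i x} with hE
  set N : ℝ≥0∞ := covN (L2dist I) (ε₁ / (R * γ)) H with hNdef
  have hRpos : (0 : ℝ) < R := by exact_mod_cast hR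
  rcases Set.eq_empty_or_nonempty H with hHe | ⟨h₀, hh₀⟩
  · -- H empty, so E empty and LHS = 0
    have hEe : E = ∅ := by
      rw [Set.eq_empty_iff_forall_notMem]
      rintro f ⟨h, a, hh, -, -⟩
      exact Set.eq_empty_iff_forall_notMem.1 hHe (h ⟨0, hR⟩) (hh ⟨0, hR⟩)
    have : covN (L2dist I) (ε₁ + ε₂) E ≤ ((∅ : Finset ((Fin k → ℝ) → ℝ)).card : ℝ≥0∞) :=
      covN_le_card (by simp) (by rw [hEe]; rintro t ⟨⟩)
    simpa using this.trans (by simp)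
  have hM0 : 0 ≤ M := (Real.sqrt_nonneg _).trans (hM h₀ hh₀)
  have hc1 : (1 : ℝ≥0∞) ≤ ENNReal.ofReal (M * R * γ / (2 * ε₂) + 1) := by
    rw [← ENNReal.ofReal_one]
    have hnn : (0 : ℝ) ≤ M * R * γ / (2 * ε₂) := by positivity
    exact ENNReal.ofReal_le_ofReal (by linarith)
  by_cases hN : N = ⊤
  · have hc0 : ENNReal.ofReal (M * R * γ / (2 * ε₂) + 1) ≠ 0 := by
      intro h0
      rw [h0] at hc1
      simp at hc1
    have htop : ENNReal.ofReal (M * R * γ / (2 * ε₂) + 1) * N = ⊤ := by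
      rw [hN]
      exact ENNReal.mul_top hc0
    rw [htop, ENNReal.top_pow (by omega)]
    exact le_top
  obtain ⟨F, hFsub, hFcov, hFcard⟩ := exists_cover_of_covN_ne_top hN
  -- the coefficient grid
  obtain ⟨G, hGcard, hGmem, hGcov⟩ :
      ∃ G : Finset ℝ, (G.card : ℝ≥0∞) ≤ ENNReal.ofReal (M * R * γ / (2 * ε₂) + 1) ∧
        (∀ b ∈ G, 0 ≤ b ∧ b ≤ γ) ∧
        ∀ α, 0 ≤ α → α ≤ γ → ∃ b ∈ G, M * |α - b| ≤ ε₂ / R := by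
    rcases eq_or_lt_of_le hM0 with hMeq | hMpos
    · refine ⟨{0}, by simpa using hc1, by simp [hγ.le], fun α h0 h1 => ⟨0, by simp, ?_⟩⟩
      rw [← hMeq]
      simp
      positivity
    · have hδ : (0 : ℝ) < 2 * ε₂ / (M * R) := by positivity
      obtain ⟨G, hc, hmem, hcov⟩ := grid_cover γ (2 * ε₂ / (M * R)) hγ hδ
      refine ⟨G, ?_, hmem, ?_⟩
      · convert hc using 3
        field_simp
      · intro α h0 h1
        obtain ⟨b, hb, hab⟩ := hcov α h0 h1
        refine ⟨b, hb, ?_⟩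
        have : M * |α - b| ≤ M * (2 * ε₂ / (M * R) / 2) :=
          mul_le_mul_of_nonneg_left hab hM0
        refine this.trans (le_of_eq ?_)
        field_simp
    -- the cover of E
  set comb : (Fin R → ((Fin k → ℝ) → ℝ) × ℝ) → ((Fin k → ℝ) → ℝ) :=
    fun p => fun x => ∑ i, (p i).2 * (p i).1 x with hcomb
  set F' : Finset ((Fin k → ℝ) → ℝ) :=
    Finset.image comb (Fintype.piFinset fun _ : Fin R => F ×ˢ G) with hF'
  have hF'sub : ↑F' ⊆ E := by
    intro f hf
    simp only [hF', Finset.coe_image, Set.mem_image, Finset.mem_coe] at hf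
    obtain ⟨p, hp, rfl⟩ := hf
    rw [Fintype.mem_piFinset] at hp
    exact ⟨fun i => (p i).1, fun i => (p i).2,
      fun i => hFsub (Finset.mem_product.1 (hp i)).1,
      fun i => hGmem _ (Finset.mem_product.1 (hp i)).2, rfl⟩
  have hF'cov : ∀ t ∈ E, ∃ t' ∈ F', L2dist I t t' ≤ ε₁ + ε₂ := by
    rintro t ⟨h, a, hh, ha, rfl⟩
    choose h' hh'F hh'd using fun i => hFcov (h i) (hh i)
    choose b hbG hbd using fun i => hGcov (a i) (ha i).1 (ha i).2
    refine ⟨comb (fun i => (h' i, b i)), Finset.mem_image.2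
      ⟨_, Fintype.mem_piFinset.2 (fun i => Finset.mem_product.2 ⟨hh'F i, hbG i⟩), rfl⟩, ?_⟩
    have hmh : ∀ i, MemLp (h i) 2 (volume.restrict I) := fun i => hH _ (hh i)
    have hmh' : ∀ i, MemLp (h' i) 2 (volume.restrict I) := fun i => hH _ (hFsub (hh'F i))
    have hmf : MemLp (fun x => ∑ i, a i * h i x) 2 (volume.restrict I) :=
      memLp_finset_sum Finset.univ (fun i _ => (hmh i).const_mul (a i))
    have hmg : MemLp (fun x => ∑ i, b i * h' i x) 2 (volume.restrict I) :=
      memLp_finset_sum Finset.univ (fun i _ => (hmh' i).const_mul (b i))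
    rw [L2dist_eq_norm hmf hmg]
    have e1 : hmf.toLp _ = ∑ i, a i • (hmh i).toLp (h i) := toLp_sum h a hmh hmf
    have e2 : hmg.toLp _ = ∑ i, b i • (hmh' i).toLp (h' i) := toLp_sum h' b hmh' hmg
    rw [e1, e2]
    set u := fun i => (hmh i).toLp (h i) with hu
    set v := fun i => (hmh' i).toLp (h' i) with hv
    calc ‖∑ i, a i • u i - ∑ i, b i • v i‖
        = ‖∑ i, (a i • u i - b i • v i)‖ := by rw [Finset.sum_sub_distrib]
      _ ≤ ∑ i, ‖a i • u i - b i • v i‖ := norm_sum_le _ _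
      _ ≤ ∑ _i : Fin R, (γ * (ε₁ / (R * γ)) + ε₂ / R) := by
          apply Finset.sum_le_sum
          intro i _
          have key : a i • u i - b i • v i = a i • (u i - v i) + (a i - b i) • v i := by
            rw [smul_sub, sub_smul]; abel
          rw [key]
          refine (norm_add_le _ _).trans ?_
          rw [norm_smul, norm_smul, Real.norm_eq_abs, Real.norm_eq_abs,
            abs_of_nonneg (ha i).1]
          have d1 : ‖u i - v i‖ ≤ ε₁ / (R * γ) := by
            rw [← L2dist_eq_norm (hmh i) (hmh' i)]
            exact hh'd i
          have d2 : ‖v i‖ ≤ M := by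
            rw [hv, norm_toLp_sqrt]
            exact hM _ (hFsub (hh'F i))
          have t1 : a i * ‖u i - v i‖ ≤ γ * (ε₁ / (R * γ)) :=
            mul_le_mul (ha i).2 d1 (norm_nonneg _) hγ.le
          have t2 : |a i - b i| * ‖v i‖ ≤ ε₂ / R := by
            calc |a i - b i| * ‖v i‖ ≤ |a i - b i| * M :=
                  mul_le_mul_of_nonneg_left d2 (abs_nonneg _)
              _ = M * |a i - b i| := mul_comm _ _
              _ ≤ ε₂ / R := hbd i
          linarith
      _ = ε₁ + ε₂ := by
          rw [Finset.sum_const, Finset.card_univ, Fintype.card_fin, nsmul_eq_mul]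
          field_simp
  refine (covN_le_card hF'sub hF'cov).trans ?_
  have hcard : (F'.card : ℝ≥0∞) ≤ ((F.card * G.card : ℕ) : ℝ≥0∞) ^ R := by
    have : F'.card ≤ (F.card * G.card) ^ R := by
      refine Finset.card_image_le.trans ?_
      rw [Fintype.card_piFinset]
      simp [Finset.card_product]
    exact_mod_cast this
  refine hcard.trans ?_
  rw [Nat.cast_mul]
  refine pow_le_pow_left' ?_ R
  calc (F.card : ℝ≥0∞) * (G.card : ℝ≥0∞)
      ≤ N * ENNReal.ofReal (M * ↑R * γ / (2 * ε₂) + 1) := mul_le_mul' hFcard hGcard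
    _ = ENNReal.ofReal (M * ↑R * γ / (2 * ε₂) + 1) * N := mul_comm _ _
end
end
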